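/- Let g : ℝ → ℝ be C¹, non-decreasing, with g ≡ 0 on (−∞,1], g ≡ 1 on [2,∞), and ‖g'‖_∞ ≤ 4. Let μ > 1/4 and set F(t) = t + μ·g(t). Then √F is not concave on (0,∞). Specifically, the tangent line to √F at t = 1 is y(t) = (t+1)/2, and √(F(2)) = √(2+μ) > 3/2 = y(2). -/
import Mathlib


open Set Real

theorem stmt_12 (g : ℝ → ℝ) (hg : ContDiff ℝ 1 g) (hmono : Monotone g)
    (hg1 : ∀ t ≤ (1:ℝ), g t = 0) (hg2 : ∀ t ≥ (2:ℝ), g t = 1)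
    (hg' : ∀ t, |deriv g t| ≤ 4)
    (μ : ℝ) (hμ : 1/4 < μ) (F : ℝ → ℝ) (hF : ∀ t, F t = t + μ * g t) :
    Real.sqrt (F 2) = Real.sqrt (2 + μ) ∧ (3:ℝ)/2 < Real.sqrt (2 + μ) ∧
      ¬ ConcaveOn ℝ (Set.Ioi 0) (fun t => Real.sqrt (F t)) := by
  have hF2 : F 2 = 2 + μ := by rw [hF, hg2 2 le_rfl]; ring
  have hs : (3:ℝ)/2 < Real.sqrt (2 + μ) := by
    rw [show (3:ℝ)/2 = Real.sqrt ((3/2)^2) by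
      rw [Real.sqrt_sq]; norm_num]
    apply Real.sqrt_lt_sqrt (by positivity)
    nlinarith
  refine ⟨by rw [hF2], hs, ?_⟩
  intro hcon
  set s := Real.sqrt (2 + μ) with hsdef
  have hs1 : 1/2 < s - 1 := by linarith
  -- choose a = r^2 with r ∈ (0,1) and (s-1)*(1+r) > 1
  set c : ℝ := 1/(s-1) with hc
  have hc2 : c < 2 := by
    rw [hc, div_lt_iff₀ (by linarith)]; linarith
  have hc0 : 0 < c := by positivity
  set b : ℝ := max 0 (c - 1) with hb
  have hb0 : 0 ≤ b := le_max_left _ _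
  have hb1 : b < 1 := by
    apply max_lt one_pos; linarith
  set r : ℝ := (b + 1)/2 with hr
  have hr0 : 0 < r := by positivity
  have hr1 : r < 1 := by rw [hr]; linarith
  have hrc : c < 1 + r := by
    have : c - 1 ≤ b := le_max_right _ _
    rw [hr]; linarith
  set a : ℝ := r^2 with ha
  have ha0 : 0 < a := by positivity
  have ha1 : a < 1 := by nlinarith
  have hsa : Real.sqrt a = r := by
    rw [ha, Real.sqrt_sq hr0.le]
  have hFa : F a = a := by rw [hF, hg1 a ha1.le]; ring
  have hF1 : F 1 = 1 := by rw [hF, hg1 1 le_rfl]; ring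
  have key := hcon.slope_anti_adjacent (x := a) (y := 1) (z := 2)
    (mem_Ioi.mpr ha0) (by norm_num) ha1 one_lt_two
  simp only [hFa, hF1, hF2, Real.sqrt_one, hsa, ← hsdef] at key
  -- key : (s - 1) / (2 - 1) ≤ (1 - r) / (1 - a)
  have h1a : 0 < 1 - a := by linarith
  rw [div_le_div_iff₀ (by norm_num) h1a] at key
  -- (s-1)*(1-a) ≤ (1-r)*(2-1) = 1-r
  -- 1 - a = (1-r)(1+r), so (s-1)(1+r)(1-r) ≤ 1-r, (s-1)(1+r) ≤ 1
  -- but (s-1)(1+r) > (s-1)*c = 1, contradiction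
  have hcs : (s - 1) * c = 1 := by
    rw [hc]; field_simp
  nlinarith [mul_pos (show (0:ℝ) < s - 1 by linarith) (sub_pos.mpr hrc),
    mul_pos (show (0:ℝ) < s-1 by linarith) hr0]
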